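/- Let G be a GFP sequence of Fibonacci type. Then for every integer n ≥ 1, Σ_{j=2}^{2n+1} (−1)^{j+1}·I(j)²·G(2j)² = d · Σ_{j=1}^{n} G(8j+2), where I(j) = g if j is even and I(j) = 1 if j is odd. -/

import Mathlib

open Polynomial Finset

theorem GFP_fib_type_alternating_square_sum (d g : Polynomial ℤ) (hd : d ≠ 0) (hg : g ≠ 0)
    (G : ℕ → Polynomial ℤ) (h0 : G 0 = 0) (h1 : G 1 = 1)
    (hrec : ∀ n : ℕ, 2 ≤ n → G n = d * G (n - 1) + g * G (n - 2))
    (n : ℕ) (hn : 1 ≤ n) :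
    ∑ j ∈ Finset.Icc 2 (2 * n + 1),
        (-1) ^ (j + 1) * (if Even j then g else 1) ^ 2 * G (2 * j) ^ 2 =
      d * ∑ j ∈ Finset.Icc 1 n, G (8 * j + 2) := by
  have hrec' : ∀ m : ℕ, G (m + 2) = d * G (m + 1) + g * G m := by
    intro m
    simpa using hrec (m + 2) (by omega)
  have hadd : ∀ m k : ℕ, G (m + k + 1) = G (m + 1) * G (k + 1) + g * (G m * G k) := by
    intro m
    induction m using Nat.strong_induction_on with
    | _ m ih =>
      match m with
      | 0 => intro k; simp [h0, h1]
      | 1 =>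
        intro k
        have h2 : G 2 = d := by simpa [h0, h1] using hrec' 0
        rw [show 1 + k + 1 = k + 2 by ring, hrec' k, h2, h1]; ring
      | (m + 2) =>
        intro k
        have e1 := ih m (by omega) k
        have e2 := ih (m + 1) (by omega) k
        rw [show m + 2 + k + 1 = (m + k + 1) + 2 by ring, hrec' (m + k + 1),
          show m + k + 1 + 1 = m + 1 + k + 1 by ring, e2, e1,
          show m + 2 + 1 = m + 1 + 2 by ring, hrec' (m + 1)]
        linear_combination (-(g * G k)) * hrec' m
  have key : ∀ k : ℕ, G (4 * k + 2) ^ 2 - g ^ 2 * G (4 * k) ^ 2 = d * G (8 * k + 2) := by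
    intro k
    have hA := hadd (4 * k + 1) (4 * k)
    rw [show 4 * k + 1 + 4 * k + 1 = 8 * k + 2 by ring,
      show 4 * k + 1 + 1 = 4 * k + 2 by ring] at hA
    have hB := hrec' (4 * k)
    linear_combination (-d) * hA + (G (4 * k + 2) + g * G (4 * k)) * hB
  induction n, hn using Nat.le_induction with
  | base =>
    have h23 : Finset.Icc 2 (2 * 1 + 1) = {2, 3} := rfl
    rw [h23, Finset.sum_pair (by norm_num), Finset.Icc_self, Finset.sum_singleton,
      if_pos (by decide : Even 2), if_neg (by decide : ¬ Even 3)]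
    have hk := key 1
    norm_num at hk ⊢
    linear_combination hk
  | succ n hn ih =>
    rw [show 2 * (n + 1) + 1 = (2 * n + 2) + 1 by ring,
      Finset.sum_Icc_succ_top (by omega : 2 ≤ 2 * n + 2 + 1),
      Finset.sum_Icc_succ_top (by omega : 2 ≤ 2 * n + 2),
      Finset.sum_Icc_succ_top (by omega : 1 ≤ n + 1), ih]
    have hev : Even (2 * n + 2) := ⟨n + 1, by ring⟩
    have hod : ¬ Even (2 * n + 2 + 1) := by simp [Nat.even_add_one, hev]
    have hk := key (n + 1)
    rw [show 4 * (n + 1) + 2 = 2 * (2 * n + 2 + 1) by ring,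
      show 4 * (n + 1) = 2 * (2 * n + 2) by ring] at hk
    rw [if_pos hev, if_neg hod]
    have h1p : (-1 : Polynomial ℤ) ^ (2 * n + 2 + 1) = -1 := by
      simpa using Odd.neg_one_pow ⟨n + 1, by ring⟩
    have h2p : (-1 : Polynomial ℤ) ^ (2 * n + 2 + 1 + 1) = 1 := by
      simpa using Even.neg_one_pow ⟨n + 2, by ring⟩
    rw [h1p, h2p]
    linear_combination hk
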